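/- Let p ≥ 2 be an even integer and K > 1/p. The region B = {(ū, η̄) : ū < 0, −ū^p ≤ η̄ ≤ −ū^p − K/ū^{p−1}} is positively invariant for the planar flow η̄' = 1, ū' = η̄ + ū^p (equivalently, for the orbit equation dη̄/dū = 1/(η̄ + ū^p)): on the boundary η̄ = −ū^p the vector field is (1, 0) pointing into B, and on the boundary η̄ = −ū^p − K/ū^{p−1}, the inner product of the vector field with the exterior normal (1, pū^{p−1} + K(1−p)/ū^p) equals 1 − Kp − K²(1−p)/ū^{2p−1}, which is strictly negative since K > 1/p, p even and ū < 0. -/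

import Mathlib

open Set Filter

/-- Barrier lemma: if `g 0 ≥ 0` and `g' > 0` whenever `g = 0`, then `g ≥ 0` on `[0,T]`. -/
lemma barrier_lemma {T : ℝ} (g g' : ℝ → ℝ)
    (hd : ∀ t ∈ Set.Icc (0:ℝ) T, HasDerivAt g (g' t) t)
    (h0 : 0 ≤ g 0)
    (hb : ∀ t ∈ Set.Icc (0:ℝ) T, g t = 0 → 0 < g' t) :
    ∀ t ∈ Set.Icc (0:ℝ) T, 0 ≤ g t := by
  by_contra hcon
  push_neg at hcon
  obtain ⟨t₀, ht₀, hgt₀⟩ := hcon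
  set S : Set ℝ := {t | t ∈ Set.Icc (0:ℝ) t₀ ∧ g t < 0} with hSdef
  have ht₀S : t₀ ∈ S := ⟨⟨ht₀.1, le_refl _⟩, hgt₀⟩
  have hne : S.Nonempty := ⟨t₀, ht₀S⟩
  have hbd : BddBelow S := ⟨0, fun x hx => hx.1.1⟩
  set s := sInf S with hsdef
  have hs0 : 0 ≤ s := le_csInf hne fun x hx => hx.1.1
  have hst : s ≤ t₀ := csInf_le hbd ht₀S
  have hsI : s ∈ Set.Icc (0:ℝ) T := ⟨hs0, hst.trans ht₀.2⟩
  have hcont : ContinuousAt g s := (hd s hsI).continuousAt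
  -- g s ≤ 0
  have hle : g s ≤ 0 := by
    have hcl : s ∈ closure S := csInf_mem_closure hne hbd
    obtain ⟨x, hxS, hxlim⟩ := mem_closure_iff_seq_limit.1 hcl
    have htt : Tendsto (g ∘ x) atTop (nhds (g s)) := hcont.tendsto.comp hxlim
    exact le_of_tendsto htt (Filter.Eventually.of_forall fun n => (hxS n).2.le)
  -- g s ≥ 0
  have hge : 0 ≤ g s := by
    rcases eq_or_lt_of_le hs0 with h | h
    · rw [← h]; exact h0
    · -- s > 0 : approach from the left, where g ≥ 0
      have hev : ∀ᶠ t in nhdsWithin s (Set.Iio s), 0 ≤ g t := by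
        have hmem : Set.Ioo (0:ℝ) s ∈ nhdsWithin s (Set.Iio s) := by
          apply mem_nhdsWithin.2
          exact ⟨Set.Ioi 0, isOpen_Ioi, h, by
            intro y hy
            exact ⟨hy.1, hy.2⟩⟩
        filter_upwards [hmem] with t ht
        by_contra hgt
        push_neg at hgt
        have htS : t ∈ S := ⟨⟨ht.1.le, ht.2.le.trans hst⟩, hgt⟩
        exact absurd (csInf_le hbd htS) (not_le.2 ht.2)
      have htt : Tendsto g (nhdsWithin s (Set.Iio s)) (nhds (g s)) :=
        hcont.continuousWithinAt.tendsto
      exact ge_of_tendsto htt hev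
  have hgs : g s = 0 := le_antisymm hle hge
  have hpos : 0 < g' s := hb s hsI hgs
  -- slope is eventually positive on the right
  have hslope : Tendsto (slope g s) (nhdsWithin s (Set.Ioi s)) (nhds (g' s)) := by
    have := hasDerivAt_iff_tendsto_slope.1 (hd s hsI)
    exact this.mono_left (nhdsWithin_mono s fun x hx => ne_of_gt hx)
  have hev2 : ∀ᶠ t in nhdsWithin s (Set.Ioi s), 0 < slope g s t :=
    hslope.eventually (eventually_gt_nhds hpos)
  obtain ⟨b, hbs, hsub⟩ := mem_nhdsGT_iff_exists_Ioo_subset.1 hev2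
  -- find a point of S in (s, b)
  obtain ⟨x, hxS, hxb⟩ := exists_lt_of_csInf_lt hne (show sInf S < b from hbs)
  have hsx : s ≤ x := csInf_le hbd hxS
  have hsx' : s < x := lt_of_le_of_ne hsx (by
    intro hcontra
    rw [← hcontra] at hxS
    exact absurd hgs (ne_of_lt hxS.2))
  have hx_mem : x ∈ Set.Ioo s b := ⟨hsx', hxb⟩
  have hsl : 0 < slope g s x := hsub hx_mem
  rw [slope_def_field] at hsl
  have : 0 < g x := by
    have hd1 : 0 < x - s := sub_pos.2 hsx'
    have := (div_pos_iff.1 hsl)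
    rcases this with ⟨h1, _⟩ | ⟨_, h2⟩
    · rw [hgs] at h1; linarith
    · linarith
  exact absurd this (not_lt.2 hxS.2.le)

/-- For p ≥ 2 even and K > 1/p, the region
B = {(u,η) : u < 0, -u^p ≤ η ≤ -u^p - K/u^{p-1}} is positively invariant for
η' = 1, u' = η + u^p: on η = -u^p the field is (1,0), and on the other boundary
the inner product with the exterior normal equals 1 - Kp - K²(1-p)/u^{2p-1} < 0. -/
theorem stmt6 (p : ℕ) (hp : 2 ≤ p) (hpe : Even p) (K : ℝ) (hK : 1/(p:ℝ) < K) :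
    (∀ u : ℝ, u < 0 → (-u ^ p) + u ^ p = 0 ∧ -u ^ p < -u ^ p - K / u ^ (p-1)) ∧
    (∀ u : ℝ, u < 0 →
      (1:ℝ) * 1 + ((-u ^ p - K / u ^ (p-1)) + u ^ p) * ((p:ℝ) * u ^ (p-1) + K*(1-(p:ℝ))/u ^ p)
        = 1 - K*(p:ℝ) - K^2*(1-(p:ℝ))/u ^ (2*p-1) ∧
      1 - K*(p:ℝ) - K^2*(1-(p:ℝ))/u ^ (2*p-1) < 0) ∧
    (∀ (T : ℝ) (η u : ℝ → ℝ), 0 ≤ T →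
      (∀ t ∈ Set.Icc 0 T, HasDerivAt η 1 t ∧ HasDerivAt u (η t + u t ^ p) t) →
      (∀ t ∈ Set.Icc 0 T, u t < 0) →
      (-u 0 ^ p ≤ η 0 ∧ η 0 ≤ -u 0 ^ p - K / u 0 ^ (p-1)) →
      ∀ t ∈ Set.Icc 0 T, -u t ^ p ≤ η t ∧ η t ≤ -u t ^ p - K / u t ^ (p-1)) := by
  obtain ⟨q, rfl⟩ : ∃ q, p = q + 2 := ⟨p - 2, by omega⟩
  have hq : Even q := by rcases hpe with ⟨k, hk⟩; exact ⟨k - 1, by omega⟩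
  have e1 : q + 2 - 1 = q + 1 := rfl
  have e2 : 2 * (q + 2) - 1 = 2 * q + 3 := by omega
  have hp0 : (0:ℝ) < (q:ℝ) + 2 := by positivity
  have hKpos : 0 < K := lt_trans (by positivity) hK
  have hK1 : 1 < K * ((q:ℝ) + 2) := by
    rw [div_lt_iff₀ (by push_cast at hp0 ⊢; linarith)] at hK
    push_cast at hK; linarith
  -- sign facts for u < 0
  have signs : ∀ u : ℝ, u < 0 →
      0 < u ^ (q+2) ∧ u ^ (q+1) < 0 ∧ u ^ (2*q+3) < 0 ∧ 0 < u ^ q := by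
    intro u hu
    have hune : u ≠ 0 := ne_of_lt hu
    refine ⟨Even.pow_pos (by exact ⟨q/2 + 1, by rcases hq with ⟨k, hk⟩; omega⟩) hune,
      Odd.pow_neg ⟨q/2, by rcases hq with ⟨k, hk⟩; omega⟩ hu,
      Odd.pow_neg ⟨q+1, by omega⟩ hu,
      Even.pow_pos hq hune⟩
  refine ⟨?_, ?_, ?_⟩
  · -- Part 1
    intro u hu
    obtain ⟨h1, h2, h3, h4⟩ := signs u hu
    refine ⟨by ring, ?_⟩
    rw [e1]
    have : K / u ^ (q+1) < 0 := div_neg_of_pos_of_neg hKpos h2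
    linarith
  · -- Part 2
    intro u hu
    obtain ⟨h1, h2, h3, h4⟩ := signs u hu
    have hune : u ≠ 0 := ne_of_lt hu
    rw [e1, e2]
    constructor
    · have hne1 : u ^ (q+1) ≠ 0 := ne_of_lt h2
      have hne2 : u ^ (q+2) ≠ 0 := ne_of_gt h1
      have hne3 : u ^ (2*q+3) ≠ 0 := ne_of_lt h3
      field_simp
      ring
    · have hdiv : K^2 * (1 - ((q:ℝ)+2)) / u ^ (2*q+3) > 0 := by
        apply div_pos_of_neg_of_neg
        · have : (1:ℝ) - ((q:ℝ)+2) < 0 := by push_cast; linarith [Nat.cast_nonneg (α := ℝ) q]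
          nlinarith [sq_nonneg K, hKpos]
        · exact h3
      push_cast at hdiv ⊢
      nlinarith [hK1]
  · -- Part 3: invariance
    intro T η u hT hderiv hu h0 t ht
    rw [e1] at h0 ⊢
    -- first barrier: g₁ = η + u^p ≥ 0
    have key1 : ∀ t ∈ Set.Icc (0:ℝ) T, 0 ≤ η t + u t ^ (q+2) := by
      apply barrier_lemma (g' := fun t => 1 + (↑(q+2) * u t ^ (q+1) * (η t + u t ^ (q+2))))
      · intro t ht
        have := (hderiv t ht).1.add ((hderiv t ht).2.pow (q+2))
        exact this
      · have h00 : (0:ℝ) ∈ Set.Icc (0:ℝ) T := ⟨le_refl _, hT⟩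
        linarith [h0.1]
      · intro t ht hz
        rw [hz]
        simp
    -- second barrier: g₂ = -u^p - K/u^{p-1} - η ≥ 0
    have key2 : ∀ t ∈ Set.Icc (0:ℝ) T, 0 ≤ -u t ^ (q+2) - K / u t ^ (q+1) - η t := by
      apply barrier_lemma (g' := fun t =>
        (-(↑(q+2) * u t ^ (q+1) * (η t + u t ^ (q+2)))
          - (0 * u t ^ (q+1) - K * (↑(q+1) * u t ^ q * (η t + u t ^ (q+2)))) / (u t ^ (q+1))^2)
          - 1)
      · intro t ht
        have hune : u t ^ (q+1) ≠ 0 := ne_of_lt (signs (u t) (hu t ht)).2.1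
        have hdu : HasDerivAt (fun s => u s ^ (q+2)) (↑(q+2) * u t ^ (q+1) * (η t + u t ^ (q+2))) t := by
          exact (hderiv t ht).2.pow (q+2)
        have hdu1 : HasDerivAt (fun s => u s ^ (q+1)) (↑(q+1) * u t ^ q * (η t + u t ^ (q+2))) t := by
          exact (hderiv t ht).2.pow (q+1)
        have hdK : HasDerivAt (fun _ : ℝ => K) 0 t := hasDerivAt_const t K
        have hdiv := hdK.div hdu1 hune
        exact (hdu.neg.sub hdiv).sub (hderiv t ht).1
      · have h00 : (0:ℝ) ∈ Set.Icc (0:ℝ) T := ⟨le_refl _, hT⟩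
        linarith [h0.2]
      · intro t ht hz
        obtain ⟨h1, h2, h3, h4⟩ := signs (u t) (hu t ht)
        have hune : u t ≠ 0 := ne_of_lt (hu t ht)
        have hne1 : u t ^ (q+1) ≠ 0 := ne_of_lt h2
        have heq : η t + u t ^ (q+2) = -K / u t ^ (q+1) := by
          have : η t = -u t ^ (q+2) - K / u t ^ (q+1) := by linarith
          rw [this]; ring
        rw [heq]
        set v := u t with hv
        have hne3 : v ^ (2*q+3) ≠ 0 := ne_of_lt h3
        have hgoal : (-(↑(q+2) * v ^ (q+1) * (-K / v ^ (q+1)))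
            - (0 * v ^ (q+1) - K * (↑(q+1) * v ^ q * (-K / v ^ (q+1)))) / (v ^ (q+1))^2) - 1
            = K * ((q:ℝ)+2) - 1 - K^2 * ((q:ℝ)+1) / v ^ (2*q+3) := by
          field_simp
          push_cast; ring
        rw [hgoal]
        have hdiv : K^2 * ((q:ℝ)+1) / v ^ (2*q+3) ≤ 0 := by
          apply div_nonpos_of_nonneg_of_nonpos
          · positivity
          · exact le_of_lt h3
        linarith
    exact ⟨by linarith [key1 t ht], by linarith [key2 t ht]⟩
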